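/- Let B = (G, β) be a bicolored graph, and let a, b, c be vertices with a, b ∈ N_G(c) and ab ∉ E(G). Then applying local inversions along the string w = cabababc (length 8) yields B_w = B^{{a,b}}; that is, the underlying graph is unchanged and exactly the colors of a and b are flipped. -/

import Mathlib

open Classical

noncomputable section

/-- The local complement of a simple graph `G` at a vertex `a`: adjacency is toggled
between every pair of distinct neighbors of `a`, all other adjacencies unchanged. -/
def localComp {V : Type*} (G : SimpleGraph V) (a : V) : SimpleGraph V where
  Adj x y := (G.Adj a x ∧ G.Adj a y ∧ x ≠ y ∧ ¬ G.Adj x y) ∨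
             (G.Adj x y ∧ ¬ (G.Adj a x ∧ G.Adj a y))
  symm := by
    constructor
    intro x y h
    rcases h with ⟨hx, hy, hne, hna⟩ | ⟨h, hn⟩
    · exact Or.inl ⟨hy, hx, hne.symm, fun h' => hna h'.symm⟩
    · exact Or.inr ⟨h.symm, fun h' => hn ⟨h'.2, h'.1⟩⟩
  loopless := by
    constructor
    intro x h
    rcases h with ⟨_, _, hne, _⟩ | ⟨h, _⟩
    · exact hne rfl
    · exact G.loopless.irrefl x h

/-- A bicolored graph: a simple graph together with a `{-1,1}`-coloring (units of ℤ). -/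
abbrev Bicolored (V : Type*) := SimpleGraph V × (V → ℤˣ)

/-- Local inversion at a vertex `a`: locally complement the graph at `a` and flip
the colors of all neighbors of `a`. -/
def localInv {V : Type*} (B : Bicolored V) (a : V) : Bicolored V :=
  (localComp B.1 a, fun v => if B.1.Adj a v then - B.2 v else B.2 v)

/-- Sequential local inversion along a string (list) of vertices. -/
def invSeq {V : Type*} (B : Bicolored V) (w : List V) : Bicolored V :=
  w.foldl localInv B

/-- `flipOn B S` keeps the underlying graph and flips the colors exactly on `S`. -/
def flipOn {V : Type*} (B : Bicolored V) (S : Set V) : Bicolored V :=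
  (B.1, fun v => if v ∈ S then - B.2 v else B.2 v)

end


noncomputable section AuxStmt7

lemma localComp_adj' {V : Type*} (G : SimpleGraph V) (a x y : V) :
    (localComp G a).Adj x y ↔ (G.Adj a x ∧ G.Adj a y ∧ x ≠ y ∧ ¬ G.Adj x y) ∨
             (G.Adj x y ∧ ¬ (G.Adj a x ∧ G.Adj a y)) := Iff.rfl

section keys
variable {V : Type*} (G : SimpleGraph V) (a b c : V)

/-- The graph obtained after the eight local complementations `cabababc`. -/
abbrev chain7 : SimpleGraph V :=
  localComp (localComp (localComp (localComp (localComp (localComp (localComp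
    (localComp G c) a) b) a) b) a) b) c

variable {G a b c}
variable (hnab : a ≠ b) (hca : G.Adj c a) (hcb : G.Adj c b) (hab : ¬ G.Adj a b)
include hnab hca hcb hab

set_option maxHeartbeats 4000000

lemma key_ab : (chain7 G a b c).Adj a b ↔ G.Adj a b := by
  have hsymm : ∀ u v : V, G.Adj u v ↔ G.Adj v u := fun u v => G.adj_comm u v
  have hac2 : a ≠ c := hca.ne'
  have hbc2 : b ≠ c := hcb.ne'
  simp_all [localComp_adj', eq_comm, ne_comm]

lemma key_ac : (chain7 G a b c).Adj a c ↔ G.Adj a c := by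
  have hsymm : ∀ u v : V, G.Adj u v ↔ G.Adj v u := fun u v => G.adj_comm u v
  have hac2 : a ≠ c := hca.ne'
  have hbc2 : b ≠ c := hcb.ne'
  simp_all [localComp_adj', eq_comm, ne_comm]

lemma key_bc : (chain7 G a b c).Adj b c ↔ G.Adj b c := by
  have hsymm : ∀ u v : V, G.Adj u v ↔ G.Adj v u := fun u v => G.adj_comm u v
  have hac2 : a ≠ c := hca.ne'
  have hbc2 : b ≠ c := hcb.ne'
  simp_all [localComp_adj', eq_comm, ne_comm]

lemma key_a {y : V} (hya : y ≠ a) (hyb : y ≠ b) (hyc : y ≠ c) :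
    (chain7 G a b c).Adj a y ↔ G.Adj a y := by
  have hsymm : ∀ u v : V, G.Adj u v ↔ G.Adj v u := fun u v => G.adj_comm u v
  have hac2 : a ≠ c := hca.ne'
  have hbc2 : b ≠ c := hcb.ne'
  by_cases h1 : G.Adj a y <;> by_cases h2 : G.Adj b y <;> by_cases h3 : G.Adj c y <;>
    simp_all [localComp_adj', eq_comm, ne_comm]

lemma key_b {y : V} (hya : y ≠ a) (hyb : y ≠ b) (hyc : y ≠ c) :
    (chain7 G a b c).Adj b y ↔ G.Adj b y := by
  have hsymm : ∀ u v : V, G.Adj u v ↔ G.Adj v u := fun u v => G.adj_comm u v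
  have hac2 : a ≠ c := hca.ne'
  have hbc2 : b ≠ c := hcb.ne'
  by_cases h1 : G.Adj a y <;> by_cases h2 : G.Adj b y <;> by_cases h3 : G.Adj c y <;>
    simp_all [localComp_adj', eq_comm, ne_comm]

lemma key_c {y : V} (hya : y ≠ a) (hyb : y ≠ b) (hyc : y ≠ c) :
    (chain7 G a b c).Adj c y ↔ G.Adj c y := by
  have hsymm : ∀ u v : V, G.Adj u v ↔ G.Adj v u := fun u v => G.adj_comm u v
  have hac2 : a ≠ c := hca.ne'
  have hbc2 : b ≠ c := hcb.ne'
  by_cases h1 : G.Adj a y <;> by_cases h2 : G.Adj b y <;> by_cases h3 : G.Adj c y <;>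
    simp_all [localComp_adj', eq_comm, ne_comm]

lemma key_gen {x y : V} (hxa : x ≠ a) (hxb : x ≠ b) (hxc : x ≠ c)
    (hya : y ≠ a) (hyb : y ≠ b) (hyc : y ≠ c) (hxy : x ≠ y) :
    (chain7 G a b c).Adj x y ↔ G.Adj x y := by
  have hsymm : ∀ u v : V, G.Adj u v ↔ G.Adj v u := fun u v => G.adj_comm u v
  have hac2 : a ≠ c := hca.ne'
  have hbc2 : b ≠ c := hcb.ne'
  have hxa' : ¬ x = a := hxa
  have hxy' : ¬ x = y := hxy
  by_cases h1 : G.Adj a x <;> by_cases h2 : G.Adj a y <;> by_cases h3 : G.Adj b x <;>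
    by_cases h4 : G.Adj b y <;> by_cases h5 : G.Adj c x <;> by_cases h6 : G.Adj c y <;>
    by_cases h7 : G.Adj x y <;>
  simp_all [localComp_adj', eq_comm, ne_comm]

lemma key_all (x y : V) : (chain7 G a b c).Adj x y ↔ G.Adj x y := by
  rcases eq_or_ne x y with rfl | hxy
  · exact iff_of_false (SimpleGraph.irrefl _) (SimpleGraph.irrefl _)
  by_cases h1 : x = a
  · rw [h1]
    have hya : y ≠ a := fun e => hxy (h1.trans e.symm)
    by_cases h2 : y = b
    · rw [h2]; exact key_ab hnab hca hcb hab
    by_cases h3 : y = c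
    · rw [h3]; exact key_ac hnab hca hcb hab
    · exact key_a hnab hca hcb hab hya h2 h3
  by_cases h2 : x = b
  · rw [h2]
    have hyb : y ≠ b := fun e => hxy (h2.trans e.symm)
    by_cases h3 : y = a
    · rw [h3]
      exact ((chain7 G a b c).adj_comm b a).trans
        ((key_ab hnab hca hcb hab).trans (G.adj_comm a b))
    by_cases h4 : y = c
    · rw [h4]; exact key_bc hnab hca hcb hab
    · exact key_b hnab hca hcb hab h3 hyb h4
  by_cases h3 : x = c
  · rw [h3]
    have hyc : y ≠ c := fun e => hxy (h3.trans e.symm)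
    by_cases h4 : y = a
    · rw [h4]
      exact ((chain7 G a b c).adj_comm c a).trans
        ((key_ac hnab hca hcb hab).trans (G.adj_comm a c))
    by_cases h5 : y = b
    · rw [h5]
      exact ((chain7 G a b c).adj_comm c b).trans
        ((key_bc hnab hca hcb hab).trans (G.adj_comm b c))
    · exact key_c hnab hca hcb hab h4 h5 hyc
  by_cases h4 : y = a
  · rw [h4]
    exact ((chain7 G a b c).adj_comm x a).trans
      ((key_a hnab hca hcb hab h1 h2 h3).trans (G.adj_comm a x))
  by_cases h5 : y = b
  · rw [h5]
    exact ((chain7 G a b c).adj_comm x b).trans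
      ((key_b hnab hca hcb hab h1 h2 h3).trans (G.adj_comm b x))
  by_cases h6 : y = c
  · rw [h6]
    exact ((chain7 G a b c).adj_comm x c).trans
      ((key_c hnab hca hcb hab h1 h2 h3).trans (G.adj_comm c x))
  · exact key_gen hnab hca hcb hab h1 h2 h3 h4 h5 h6 hxy

end keys

set_option maxHeartbeats 2000000 in
lemma col7 {V : Type*} (B : Bicolored V) (a b c : V) (hnab : a ≠ b)
    (hca : B.1.Adj c a) (hcb : B.1.Adj c b) (hab : ¬ B.1.Adj a b) (v : V) :
    (invSeq B [c, a, b, a, b, a, b, c]).2 v = if v = a ∨ v = b then - B.2 v else B.2 v := by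
  obtain ⟨G, β⟩ := B
  simp only at hca hcb hab
  have hsymm : ∀ u v : V, G.Adj u v ↔ G.Adj v u := fun u v => G.adj_comm u v
  have hac2 : a ≠ c := hca.ne'
  have hbc2 : b ≠ c := hcb.ne'
  simp only [invSeq, List.foldl, localInv]
  rcases eq_or_ne v a with rfl | hva
  · simp_all [localComp_adj', eq_comm, ne_comm]
  rcases eq_or_ne v b with rfl | hvb
  · simp_all [localComp_adj', eq_comm, ne_comm]
  rcases eq_or_ne v c with rfl | hvc
  · simp_all [localComp_adj', eq_comm, ne_comm]
  by_cases h1 : G.Adj a v <;> by_cases h2 : G.Adj b v <;> by_cases h3 : G.Adj c v <;>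
    simp_all [localComp_adj', eq_comm, ne_comm]

end AuxStmt7

/-- If `a, b` are nonadjacent neighbors of `c`, the string `cabababc` flips exactly
the colors of `a` and `b` and leaves the underlying graph unchanged. -/
theorem stmt7 {V : Type*} (B : Bicolored V) (a b c : V) (hne : a ≠ b)
    (hca : B.1.Adj c a) (hcb : B.1.Adj c b) (hab : ¬ B.1.Adj a b) :
    invSeq B [c, a, b, a, b, a, b, c] = flipOn B {a, b} := by
  have hg : (invSeq B [c, a, b, a, b, a, b, c]).1 = (flipOn B {a, b}).1 := by
    show (invSeq B [c, a, b, a, b, a, b, c]).1 = B.1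
    have : (invSeq B [c, a, b, a, b, a, b, c]).1 = chain7 B.1 a b c := by
      simp only [invSeq, List.foldl, localInv]
    rw [this]
    ext x y
    exact key_all hne hca hcb hab x y
  have hc : (invSeq B [c, a, b, a, b, a, b, c]).2 = (flipOn B {a, b}).2 := by
    funext v
    show _ = (flipOn B {a, b}).2 v
    simp only [flipOn, Set.mem_insert_iff, Set.mem_singleton_iff]
    exact col7 B a b c hne hca hcb hab v
  exact Prod.ext hg hc
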